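/- (Lemma B.1.) The product of two real positive semidefinite matrices is diagonalizable: if A and B are N×N real positive semidefinite matrices, then there exist an invertible real matrix S and a diagonal real matrix Λ such that A B = S Λ S⁻¹. -/

import Mathlib

set_option maxHeartbeats 1000000


open Matrix
open scoped MatrixOrder

theorem stmt_8 (N : ℕ) (A B : Matrix (Fin N) (Fin N) ℝ)
    (hA : A.PosSemidef) (hB : B.PosSemidef) :
    ∃ (S : Matrix (Fin N) (Fin N) ℝ) (lam : Fin N → ℝ),
      IsUnit S.det ∧ A * B = S * Matrix.diagonal lam * S⁻¹ := by
  classical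
  rcases Nat.eq_zero_or_pos N with hN | hN
  · subst hN
    exact ⟨1, 0, by simp, Subsingleton.elim _ _⟩
  set C := CFC.sqrt A with hCdef
  set D := CFC.sqrt B with hDdef
  have hCC : C * C = A := CFC.sqrt_mul_sqrt_self A hA.nonneg
  have hDD : D * D = B := CFC.sqrt_mul_sqrt_self B hB.nonneg
  have hCH : Cᴴ = C := (CFC.sqrt_nonneg A).posSemidef.isHermitian
  have hDH : Dᴴ = D := (CFC.sqrt_nonneg B).posSemidef.isHermitian
  set H := C * B * C with hHdef
  have hHps : H.PosSemidef := by
    have := hB.mul_mul_conjTranspose_same C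
    rwa [hCH] at this
  have hHherm : H.IsHermitian := hHps.isHermitian
  set μ : Fin N → ℝ := hHherm.eigenvalues with hμdef
  set u := hHherm.eigenvectorBasis with hudef
  have hHu : ∀ i, H *ᵥ ⇑(u i) = μ i • ⇑(u i) := hHherm.mulVec_eigenvectorBasis
  -- rank inequality
  have hrank : (A * B).rank ≤ H.rank := by
    have h1 : H = (C * D) * (C * D)ᴴ := by
      rw [conjTranspose_mul, hCH, hDH, hHdef, ← hDD]
      noncomm_ring
    have h2 : A * B = C * ((C * D) * D) := by
      rw [← hCC, ← hDD]; noncomm_ring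
    calc (A * B).rank = (C * ((C * D) * D)).rank := by rw [h2]
      _ ≤ ((C * D) * D).rank := rank_mul_le_right _ _
      _ ≤ (C * D).rank := rank_mul_le_left _ _
      _ = ((C * D) * (C * D)ᴴ).rank := (rank_self_mul_conjTranspose _).symm
      _ = H.rank := by rw [← h1]
  -- eigenvectors for nonzero eigenvalues
  set ι := {i : Fin N // μ i ≠ 0} with hιdef
  have hcardι : Fintype.card ι = H.rank := (hHherm.rank_eq_card_non_zero_eigs).symm
  set v : ι → (Fin N → ℝ) := fun i => C *ᵥ ⇑(u i.1) with hvdef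
  have hfv : ∀ i : ι, (A * B) *ᵥ v i = μ i.1 • v i := by
    intro i
    have h3 : A * B * C = C * H := by rw [hHdef, ← hCC]; noncomm_ring
    rw [hvdef]
    rw [mulVec_mulVec, h3, ← mulVec_mulVec, hHu, mulVec_smul]
  -- linear independence of u restricted
  have hu_li : LinearIndependent ℝ (fun i : Fin N => ⇑(u i)) := by
    exact (u.toBasis.map (WithLp.linearEquiv 2 ℝ (Fin N → ℝ))).linearIndependent
  have hu_li' : LinearIndependent ℝ (fun i : ι => ⇑(u i.1)) :=
    hu_li.comp Subtype.val Subtype.val_injective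
  -- independence of v
  have hgv : ∀ i : ι, (C * B) *ᵥ v i = μ i.1 • ⇑(u i.1) := by
    intro i
    rw [hvdef, mulVec_mulVec, ← hHdef, hHu]
  have hsmul_li : LinearIndependent ℝ (fun i : ι => μ i.1 • ⇑(u i.1)) := by
    have h := hu_li'.units_smul (fun i => Units.mk0 (μ i.1) i.2)
    have heq : ((fun i : ι => Units.mk0 (μ i.1) i.2) • (fun i : ι => ⇑(u i.1)))
        = fun i : ι => μ i.1 • ⇑(u i.1) := by
      funext i
      rw [Pi.smul_apply']
      rfl
    rwa [heq] at h
  have hv_li : LinearIndependent ℝ v := by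
    apply LinearIndependent.of_comp (C * B).mulVecLin
    convert hsmul_li using 1
    funext i
    simp only [Function.comp_apply, mulVecLin_apply]
    exact hgv i
    rfl
  -- kernel
  set f := (A * B).mulVecLin with hfdef
  set K := LinearMap.ker f with hKdef
  set m := Module.finrank ℝ K with hmdef
  have hrn : (A * B).rank + m = N := by
    have := LinearMap.finrank_range_add_finrank_ker f
    rw [Module.finrank_fintype_fun_eq_card, Fintype.card_fin] at this
    exact this
  set kb := Module.finBasis ℝ K with hkbdef
  set k : Fin m → (Fin N → ℝ) := fun j => (kb j : Fin N → ℝ) with hkdef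
  have hk_li : LinearIndependent ℝ k := by
    have := kb.linearIndependent.map' K.subtype (Submodule.ker_subtype K)
    exact this
  have hk_mem : ∀ j, f (k j) = 0 := fun j => (kb j).2
  -- disjointness
  have hdisj : Disjoint (Submodule.span ℝ (Set.range v)) (Submodule.span ℝ (Set.range k)) := by
    have hsub : Submodule.span ℝ (Set.range k) ≤ K := by
      rw [Submodule.span_le]
      rintro x ⟨j, rfl⟩
      exact (kb j).2
    refine Disjoint.mono_right hsub ?_
    rw [Submodule.disjoint_def]
    intro x hxv hxK
    rw [Submodule.mem_span_range_iff_exists_fun] at hxv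
    obtain ⟨c, hc⟩ := hxv
    have hfx : f x = 0 := hxK
    have hsum : ∑ i, (c i * μ i.1) • v i = 0 := by
      have : f (∑ i, c i • v i) = 0 := by rw [hc, hfx]
      rw [map_sum] at this
      calc ∑ i, (c i * μ i.1) • v i = ∑ i, f (c i • v i) := by
            refine Finset.sum_congr rfl fun i _ => ?_
            rw [_root_.map_smul, hfdef, mulVecLin_apply, hfv i, smul_smul]
        _ = 0 := this
    have hc0 : ∀ i, c i * μ i.1 = 0 := by
      have := Fintype.linearIndependent_iff.mp hv_li (fun i => c i * μ i.1) hsum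
      exact this
    have : ∀ i, c i = 0 := fun i =>
      (mul_eq_zero.mp (hc0 i)).resolve_right i.2
    rw [← hc]
    simp [this]
  -- combined family
  set w : ι ⊕ Fin m → (Fin N → ℝ) := Sum.elim v k with hwdef
  have hw_li : LinearIndependent ℝ w := hv_li.sum_type hk_li hdisj
  have hcard : Fintype.card (ι ⊕ Fin m) = N := by
    have hle : Fintype.card (ι ⊕ Fin m) ≤ N := by
      have := hw_li.fintype_card_le_finrank
      rwa [Module.finrank_fintype_fun_eq_card, Fintype.card_fin] at this
    have hge : N ≤ Fintype.card (ι ⊕ Fin m) := by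
      rw [Fintype.card_sum, Fintype.card_fin, hcardι]
      omega
    omega
  have hne : Nonempty (ι ⊕ Fin m) := by
    rw [← Fintype.card_pos_iff, hcard]; exact hN
  have hfinrank : Fintype.card (ι ⊕ Fin m) = Module.finrank ℝ (Fin N → ℝ) := by
    rw [hcard, Module.finrank_fintype_fun_eq_card, Fintype.card_fin]
  set b := basisOfLinearIndependentOfCardEqFinrank hw_li hfinrank with hbdef
  have hb_eq : ⇑b = w := coe_basisOfLinearIndependentOfCardEqFinrank hw_li hfinrank
  set lamSum : ι ⊕ Fin m → ℝ := Sum.elim (fun i => μ i.1) 0 with hlamSumdef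
  have heig : ∀ j, (A * B) *ᵥ (b j) = lamSum j • b j := by
    intro j
    rw [hb_eq]
    cases j with
    | inl i => exact hfv i
    | inr i =>
      have : (A * B) *ᵥ k i = 0 := hk_mem i
      simpa [hwdef, hlamSumdef] using this
  -- build S
  set e := Fintype.equivFinOfCardEq hcard with hedef
  set b' := b.reindex e with hb'def
  set lam : Fin N → ℝ := fun j => lamSum (e.symm j) with hlamdef
  set S : Matrix (Fin N) (Fin N) ℝ := Matrix.of (fun i j => b' j i) with hSdef
  have hS_toMatrix : S = (Pi.basisFun ℝ (Fin N)).toMatrix ⇑b' := by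
    ext i j
    rw [Module.Basis.toMatrix_apply]
    simp [hSdef]
  have hSdet : IsUnit S.det := by
    rw [hS_toMatrix, ← Module.Basis.det_apply]
    exact (Pi.basisFun ℝ (Fin N)).isUnit_det b'
  have hmul : A * B * S = S * Matrix.diagonal lam := by
    ext i j
    have hcol : (fun t => S t j) = b' j := by funext t; rfl
    have h4 : (A * B * S) i j = ((A * B) *ᵥ (b' j)) i := by
      rw [← hcol]
      simp [Matrix.mul_apply, mulVec, dotProduct]
    have h5 : (A * B) *ᵥ (b' j) = lam j • (b' j) := by
      have hrj : b' j = b (e.symm j) := by rw [hb'def, Module.Basis.reindex_apply]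
      rw [hrj, hlamdef]
      exact heig (e.symm j)
    rw [h4, h5, Matrix.mul_diagonal]
    simp [hSdef, mul_comm]
  refine ⟨S, lam, hSdet, ?_⟩
  calc A * B = A * B * S * S⁻¹ := by
        rw [Matrix.mul_assoc, Matrix.mul_nonsing_inv S hSdet, Matrix.mul_one]
    _ = S * Matrix.diagonal lam * S⁻¹ := by rw [hmul]
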